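/- Let s ≥ 2 be an integer and let λ be an s-minimal biliaison type with s-dual λ′. Then u_{λ′} = u_λ, d_{λ′} = u_λ·s − d_λ, and q_s(λ′) = q_s(λ). -/

import Mathlib

/-- An `s`-minimal biliaison type: a strictly increasing finite sequence of
positive integers, all strictly less than `s` (the empty sequence is allowed). -/
def SMinimal (s : ℕ) (l : List ℕ) : Prop :=
  l.Chain' (· < ·) ∧ ∀ k ∈ l, 0 < k ∧ k < s

/-- The quadratic form `q_s(λ) = Σ_i k_i(s−1)(s−k_i) − 2 Σ_{i<j} k_i(s−k_j)`. -/
def qform (s : ℕ) (l : List ℕ) : ℤ :=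
  (∑ i : Fin l.length, (l.get i : ℤ) * ((s : ℤ) - 1) * ((s : ℤ) - l.get i))
  - 2 * ∑ i : Fin l.length, ∑ j : Fin l.length,
      if (i : ℕ) < (j : ℕ) then (l.get i : ℤ) * ((s : ℤ) - l.get j) else 0

/-- The `s`-dual `λ′ = (s−k_u, …, s−k_1)` of a biliaison type. -/
def sdual (s : ℕ) (l : List ℕ) : List ℕ := (l.map (fun k => s - k)).reverse

def Qr (s n : ℕ) (a : ℕ → ℤ) : ℤ :=
  (∑ i ∈ Finset.range n, a i * ((s : ℤ) - 1) * ((s : ℤ) - a i))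
  - 2 * ∑ i ∈ Finset.range n, ∑ j ∈ Finset.range n,
      if i < j then a i * ((s : ℤ) - a j) else 0

lemma qform_eq_Qr (s : ℕ) (L : List ℕ) :
    qform s L = Qr s L.length (fun i => (L.getD i 0 : ℤ)) := by
  unfold qform Qr
  have h1 : ∀ i : Fin L.length, (L.get i : ℤ) = ((L.getD i.val 0 : ℕ) : ℤ) := by
    intro i; rw [List.getD_eq_getElem _ _ i.isLt]; rfl
  simp_rw [h1]
  rw [Fin.sum_univ_eq_sum_range (fun i => ((L.getD i 0 : ℕ) : ℤ) * ((s:ℤ)-1) * ((s:ℤ) - (L.getD i 0 : ℕ)))]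
  congr 1
  congr 1
  rw [Fin.sum_univ_eq_sum_range (fun i => ∑ j : Fin L.length,
      if i < (j:ℕ) then ((L.getD i 0 : ℕ) : ℤ) * ((s:ℤ) - (L.getD j.val 0 : ℕ)) else 0)]
  apply Finset.sum_congr rfl
  intro i _
  rw [Fin.sum_univ_eq_sum_range (fun j =>
      if i < j then ((L.getD i 0 : ℕ) : ℤ) * ((s:ℤ) - (L.getD j 0 : ℕ)) else 0)]

lemma double_reflect (n : ℕ) (F : ℕ → ℕ → ℤ) :
    ∑ i ∈ Finset.range n, ∑ j ∈ Finset.range n, F (n - 1 - i) (n - 1 - j) =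
    ∑ i ∈ Finset.range n, ∑ j ∈ Finset.range n, F i j := by
  rw [Finset.sum_range_reflect (fun i => ∑ j ∈ Finset.range n, F i (n - 1 - j))]
  exact Finset.sum_congr rfl fun i _ => Finset.sum_range_reflect (fun j => F i j) n

lemma Qr_rev (s n : ℕ) (a b : ℕ → ℤ) (hb : ∀ i < n, b i = (s : ℤ) - a (n - 1 - i)) :
    Qr s n b = Qr s n a := by
  unfold Qr
  congr 1
  · rw [← Finset.sum_range_reflect]
    apply Finset.sum_congr rfl
    intro i hi
    rw [Finset.mem_range] at hi
    rw [hb (n - 1 - i) (by omega), show n - 1 - (n - 1 - i) = i by omega]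
    ring
  · congr 1
    rw [← double_reflect n (fun i j => if i < j then b i * ((s:ℤ) - b j) else 0)]
    rw [Finset.sum_comm]
    apply Finset.sum_congr rfl
    intro x hx
    rw [Finset.mem_range] at hx
    apply Finset.sum_congr rfl
    intro y hy
    rw [Finset.mem_range] at hy
    by_cases h : x < y
    · rw [if_pos (by omega : n - 1 - y < n - 1 - x), if_pos h]
      rw [hb (n-1-y) (by omega), hb (n-1-x) (by omega),
        show n - 1 - (n - 1 - y) = y by omega, show n - 1 - (n - 1 - x) = x by omega]
      ring
    · rw [if_neg (by omega : ¬ n - 1 - y < n - 1 - x), if_neg h]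

/-- The invariants of the `s`-dual: same length, degree `u·s − d`, same `q_s`. -/
theorem stmt0 (s : ℕ) (hs : 2 ≤ s) (l : List ℕ) (hl : SMinimal s l) :
    (sdual s l).length = l.length ∧
    ((sdual s l).sum : ℤ) = (l.length : ℤ) * s - l.sum ∧
    qform s (sdual s l) = qform s l := by
  obtain ⟨-, hbd⟩ := hl
  have hlen : (sdual s l).length = l.length := by simp [sdual]
  refine ⟨hlen, ?_, ?_⟩
  · rw [sdual, List.sum_reverse]
    have : ∀ L : List ℕ, (∀ k ∈ L, k ≤ s) →
        ((L.map (fun k => s - k)).sum : ℤ) = (L.length : ℤ) * s - L.sum := by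
      intro L h
      induction L with
      | nil => simp
      | cons a t ih =>
        simp only [List.map_cons, List.sum_cons, List.length_cons]
        have h1 := ih (fun k hk => h k (List.mem_cons_of_mem _ hk))
        have h2 : a ≤ s := h a List.mem_cons_self
        push_cast [Nat.cast_sub h2] at h1 ⊢
        linarith
    exact this l (fun k hk => (hbd k hk).2.le)
  · have hent : ∀ i < l.length,
        ((sdual s l).getD i 0 : ℤ) = (s : ℤ) - (l.getD (l.length - 1 - i) 0 : ℤ) := by
      intro i hi
      have hi' : i < (sdual s l).length := by omega
      rw [List.getD_eq_getElem _ _ hi']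
      have hj : l.length - 1 - i < l.length := by omega
      rw [List.getD_eq_getElem _ _ hj]
      have hk : l[l.length - 1 - i] < s := (hbd _ (List.getElem_mem _)).2
      simp only [sdual]
      rw [List.getElem_reverse]
      simp only [List.getElem_map, List.length_map]
      rw [Nat.cast_sub hk.le]
    rw [qform_eq_Qr, qform_eq_Qr, hlen]
    exact Qr_rev s l.length _ _ hent
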